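/- Let F₁ and F₂ be edge sets of a hypergraph G such that V(F₁) ∩ V(F₂) = ∂(F₁) ∩ ∂(F₂). Let 𝒯ᵢ be a branch-decomposition of Fᵢ for i = 1, 2, and let 𝒯 be the composition of 𝒯₁ and 𝒯₂. Then the width of 𝒯 is at most the largest of the width of 𝒯₁, the width of 𝒯₂, and |∂(F₁ ∪ F₂)|. -/

import Mathlib

open Finset

universe u

/-- Rooted binary trees whose leaves carry labels of type `α`.  Every node has
at most two children; each leaf carries the edge assigned to it, so the leaf
map `φ` is built into the tree. -/
inductive BTree (α : Type u) : Type u where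
  | leaf : α → BTree α
  | node1 : BTree α → BTree α
  | node2 : BTree α → BTree α → BTree α

namespace BTree

variable {α : Type u}

/-- The multiset of labels of the leaves of a tree. -/
def leafLabels : BTree α → Multiset α
  | leaf a => {a}
  | node1 c => leafLabels c
  | node2 c₁ c₂ => leafLabels c₁ + leafLabels c₂

/-- `s.Occurs t` : `s` is (the subtree rooted at) a node of `t`. -/
def Occurs (s : BTree α) : BTree α → Prop
  | leaf a => s = leaf a
  | node1 c => s = node1 c ∨ Occurs s c
  | node2 c₁ c₂ => s = node2 c₁ c₂ ∨ Occurs s c₁ ∨ Occurs s c₂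

/-- A tree is full if every internal node has exactly two children. -/
def IsFull : BTree α → Prop
  | leaf _ => True
  | node1 _ => False
  | node2 c₁ c₂ => IsFull c₁ ∧ IsFull c₂

/-- The list of all (subtrees rooted at) nodes of a tree. -/
def nodes : BTree α → List (BTree α)
  | leaf a => [leaf a]
  | node1 c => node1 c :: nodes c
  | node2 c₁ c₂ => node2 c₁ c₂ :: (nodes c₁ ++ nodes c₂)

end BTree

variable {V : Type u} [DecidableEq V] [Fintype V]

/-- `vtxs F` is `V(F)` : the union of the hyperedges in `F`. -/
def vtxs (F : Finset (Finset V)) : Finset V := F.sup id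

/-- The boundary `∂(F) = V(F) ∩ V(E ∖ F)` of an edge set `F` of the hypergraph
with edge set `E`. -/
def ebnd (E F : Finset (Finset V)) : Finset V := vtxs F ∩ vtxs (E \ F)

/-- `t` is a (relaxed) branch-decomposition of the edge set `F` : the set of
leaf labels is exactly `F`, i.e. the leaf map is a surjection onto `F`. -/
def IsBD (F : Finset (Finset V)) (t : BTree (Finset V)) : Prop :=
  t.leafLabels.toFinset = F

/-- The lower edge set `L(p)` of a node `p` : the edges assigned to the leaves
in the subtree rooted at `p`. -/
def lowerSet (p : BTree (Finset V)) : Finset (Finset V) := p.leafLabels.toFinset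

/-- The upper edge set `U(p)` of a node `p` of a branch-decomposition `t` of
`F` in the hypergraph with edge set `E` : the edges assigned to leaves outside
the subtree rooted at `p`, together with `E ∖ F`. -/
def upperSet (E F : Finset (Finset V)) (t p : BTree (Finset V)) : Finset (Finset V) :=
  (t.leafLabels - p.leafLabels).toFinset ∪ (E \ F)

/-- The middle set `V(L(p)) ∩ V(U(p))` of a node `p`. -/
def midSet (E F : Finset (Finset V)) (t p : BTree (Finset V)) : Finset V :=
  vtxs (lowerSet p) ∩ vtxs (upperSet E F t p)

/-- The width of a branch-decomposition: the maximum order of a node. -/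
def bdWidth (E F : Finset (Finset V)) (t : BTree (Finset V)) : ℕ :=
  (t.nodes.map (fun p => (midSet E F t p).card)).foldr max 0

/-- The branchwidth `bw_G(F)` of an edge set `F` of the hypergraph with edge
set `E` : the minimum width of a branch-decomposition of `F`. -/
noncomputable def ebw (E F : Finset (Finset V)) : ℕ :=
  sInf {w | ∃ t : BTree (Finset V), IsBD F t ∧ bdWidth E F t = w}

/-- The branchwidth of a hypergraph given by its edge set. -/
noncomputable def hbw (E : Finset (Finset V)) : ℕ := ebw E E

lemma foldr_max_le {l : List ℕ} {b : ℕ} (h : ∀ x ∈ l, x ≤ b) : l.foldr max 0 ≤ b := by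
  induction l with
  | nil => simp
  | cons a l ih =>
      simp only [List.foldr_cons, max_le_iff]
      exact ⟨h a (.head _), ih fun x hx => h x (.tail _ hx)⟩

lemma le_foldr_max {l : List ℕ} {x : ℕ} (h : x ∈ l) : x ≤ l.foldr max 0 := by
  induction l with
  | nil => cases h
  | cons a l ih =>
      rcases List.mem_cons.mp h with rfl | h
      · exact le_max_left _ _
      · exact le_trans (ih h) (le_max_right _ _)

lemma leafLabels_le_of_mem_nodes {α : Type u} {p t : BTree α} (h : p ∈ t.nodes) :
    p.leafLabels ≤ t.leafLabels := by
  induction t with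
  | leaf a => simp only [BTree.nodes, List.mem_singleton] at h; subst h; exact le_rfl
  | node1 c ih =>
      rcases List.mem_cons.mp h with rfl | h
      · exact le_rfl
      · exact ih h
  | node2 c₁ c₂ ih₁ ih₂ =>
      rcases List.mem_cons.mp h with rfl | h
      · exact le_rfl
      · rcases List.mem_append.mp h with h | h
        · exact le_trans (ih₁ h) (Multiset.le_add_right _ _)
        · exact le_trans (ih₂ h) (Multiset.le_add_left _ _)

lemma vtxs_mono {A B : Finset (Finset V)} (h : A ⊆ B) : vtxs A ⊆ vtxs B :=
  Finset.le_iff_subset.mp (Finset.sup_mono h)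

lemma mid_subset (E F₁ F₂ : Finset (Finset V))
    (hmeet : vtxs F₁ ∩ vtxs F₂ = ebnd E F₁ ∩ ebnd E F₂)
    (t₁ t₂ p : BTree (Finset V)) (h₁ : IsBD F₁ t₁) (h₂ : IsBD F₂ t₂)
    (hp : p ∈ t₁.nodes) :
    midSet E (F₁ ∪ F₂) (BTree.node2 t₁ t₂) p ⊆ midSet E F₁ t₁ p := by
  intro v hv
  rw [midSet, Finset.mem_inter] at hv
  obtain ⟨hl, hu⟩ := hv
  rw [midSet, Finset.mem_inter]
  refine ⟨hl, ?_⟩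
  have hple : p.leafLabels ≤ t₁.leafLabels := leafLabels_le_of_mem_nodes hp
  -- rewrite the upper set of the composition
  have hup : upperSet E (F₁ ∪ F₂) (BTree.node2 t₁ t₂) p =
      ((t₁.leafLabels - p.leafLabels).toFinset ∪ F₂) ∪ (E \ (F₁ ∪ F₂)) := by
    rw [upperSet]
    congr 1
    show ((t₁.leafLabels + t₂.leafLabels) - p.leafLabels).toFinset = _
    rw [← tsub_add_eq_add_tsub hple, Multiset.toFinset_add, h₂]
  rw [hup] at hu
  have hvF₁ : v ∈ vtxs F₁ := by
    refine vtxs_mono ?_ hl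
    rw [lowerSet, ← h₁]
    exact Multiset.toFinset_subset.mpr (Multiset.subset_of_le hple)
  rw [vtxs, Finset.mem_sup] at hu
  obtain ⟨e, he, hve⟩ := hu
  rcases Finset.mem_union.mp he with he | he
  · rcases Finset.mem_union.mp he with he | he
    · -- e is outside p within t₁
      rw [vtxs, Finset.mem_sup]
      exact ⟨e, Finset.mem_union_left _ he, hve⟩
    · -- e ∈ F₂ : v ∈ V(F₁) ∩ V(F₂), use hmeet
      have hvF₂ : v ∈ vtxs F₂ := by
        rw [vtxs, Finset.mem_sup]; exact ⟨e, he, hve⟩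
      have : v ∈ ebnd E F₁ ∩ ebnd E F₂ := by
        rw [← hmeet]; exact Finset.mem_inter.mpr ⟨hvF₁, hvF₂⟩
      have hvb : v ∈ vtxs (E \ F₁) := (Finset.mem_inter.mp
        (Finset.mem_inter.mp this).1).2
      exact vtxs_mono (Finset.subset_union_right) hvb
  · -- e ∈ E \ (F₁ ∪ F₂) ⊆ E \ F₁
    have : e ∈ E \ F₁ := by
      rw [Finset.mem_sdiff] at he ⊢
      exact ⟨he.1, fun h => he.2 (Finset.mem_union_left _ h)⟩
    rw [vtxs, Finset.mem_sup]
    exact ⟨e, Finset.mem_union_right _ this, hve⟩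

/-- If `V(F₁) ∩ V(F₂) = ∂(F₁) ∩ ∂(F₂)` then the width of the composition of
branch-decompositions of `F₁` and `F₂` is at most the largest of the two widths
and `|∂(F₁ ∪ F₂)|`. -/
theorem composition_width_le (E F₁ F₂ : Finset (Finset V))
    (hF₁E : F₁ ⊆ E) (hF₂E : F₂ ⊆ E) (hne : ∀ e ∈ E, e.Nonempty)
    (hmeet : vtxs F₁ ∩ vtxs F₂ = ebnd E F₁ ∩ ebnd E F₂)
    (t₁ t₂ : BTree (Finset V)) (h₁ : IsBD F₁ t₁) (h₂ : IsBD F₂ t₂) :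
    bdWidth E (F₁ ∪ F₂) (BTree.node2 t₁ t₂) ≤
      max (max (bdWidth E F₁ t₁) (bdWidth E F₂ t₂)) (ebnd E (F₁ ∪ F₂)).card := by
  apply foldr_max_le
  intro x hx
  rw [List.mem_map] at hx
  obtain ⟨p, hp, rfl⟩ := hx
  rw [show (BTree.node2 t₁ t₂).nodes =
    BTree.node2 t₁ t₂ :: (t₁.nodes ++ t₂.nodes) from rfl,
    List.mem_cons, List.mem_append] at hp
  rcases hp with rfl | hp | hp
  · -- the root
    have hmid : midSet E (F₁ ∪ F₂) (BTree.node2 t₁ t₂) (BTree.node2 t₁ t₂) =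
        ebnd E (F₁ ∪ F₂) := by
      rw [midSet, ebnd]
      congr 1
      · rw [lowerSet, show (BTree.node2 t₁ t₂).leafLabels =
          t₁.leafLabels + t₂.leafLabels from rfl, Multiset.toFinset_add, h₁, h₂]
      · rw [upperSet, tsub_self, Multiset.toFinset_zero, Finset.empty_union]
    rw [hmid]
    exact le_max_right _ _
  · refine le_trans ?_ (le_max_of_le_left (le_max_left _ _))
    calc (midSet E (F₁ ∪ F₂) (BTree.node2 t₁ t₂) p).card
        ≤ (midSet E F₁ t₁ p).card :=
          Finset.card_le_card (mid_subset E F₁ F₂ hmeet t₁ t₂ p h₁ h₂ hp)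
      _ ≤ bdWidth E F₁ t₁ := le_foldr_max (List.mem_map_of_mem hp)
  · refine le_trans ?_ (le_max_of_le_left (le_max_right _ _))
    have hmeet' : vtxs F₂ ∩ vtxs F₁ = ebnd E F₂ ∩ ebnd E F₁ := by
      rw [Finset.inter_comm, hmeet, Finset.inter_comm]
    have hsub := mid_subset E F₂ F₁ hmeet' t₂ t₁ p h₂ h₁ hp
    have hswap : midSet E (F₁ ∪ F₂) (BTree.node2 t₁ t₂) p =
        midSet E (F₂ ∪ F₁) (BTree.node2 t₂ t₁) p := by
      rw [midSet, midSet]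
      congr 2
      rw [upperSet, upperSet, Finset.union_comm F₁ F₂,
        show (BTree.node2 t₁ t₂).leafLabels = t₁.leafLabels + t₂.leafLabels from rfl,
        show (BTree.node2 t₂ t₁).leafLabels = t₂.leafLabels + t₁.leafLabels from rfl,
        add_comm]
    calc (midSet E (F₁ ∪ F₂) (BTree.node2 t₁ t₂) p).card
        = (midSet E (F₂ ∪ F₁) (BTree.node2 t₂ t₁) p).card := by rw [hswap]
      _ ≤ (midSet E F₂ t₂ p).card := Finset.card_le_card hsub
      _ ≤ bdWidth E F₂ t₂ := le_foldr_max (List.mem_map_of_mem hp)
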